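/- Let Λ be a W-stable lattice with Q^∨ ⊆ Λ ⊆ P^∨ and let Ω_Λ = π(Λ ⋊ W) ≤ Ω. For minuscule indices i, j: (a) ω_i ∈ Ω_Λ iff ϖ_i^∨ ∈ Λ; (b) Ω_Λ maps 𝒜₀ ∩ Λ to itself; (c) ω_i Ω_Λ = ω_j Ω_Λ iff ϖ_i^∨ − ϖ_j^∨ ∈ Λ. -/

import Mathlib

open scoped RealInnerProductSpace Pointwise

noncomputable section

variable (E : Type) [NormedAddCommGroup E] [InnerProductSpace ℝ E] [FiniteDimensional ℝ E]

/-- The coroot `x^∨ = 2x/⟪x,x⟫` of a vector, under the identification of `V` with `V*`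
via the inner product. -/
def coroot (x : E) : E := (2 / ⟪x, x⟫) • x

/-- Data of an irreducible reduced root system `Φ` in a Euclidean space `E`,
together with a system of simple roots `α i`, the highest root `α₀` with its coefficients
`n i`, and the fundamental coweights `ϖ i`. -/
structure KPData (r : ℕ) where
  Φ : Finset E
  Φ_nonempty : Φ.Nonempty
  root_ne_zero : ∀ x ∈ Φ, x ≠ (0 : E)
  span_eq_top : Submodule.span ℝ (Φ : Set E) = ⊤
  reduced : ∀ x ∈ Φ, ∀ t : ℝ, t • x ∈ Φ → t = 1 ∨ t = -1
  integrality : ∀ x ∈ Φ, ∀ y ∈ Φ, ∃ m : ℤ, ⟪coroot E x, y⟫ = (m : ℝ)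
  reflect_mem : ∀ x ∈ Φ, ∀ y ∈ Φ, y - ⟪coroot E x, y⟫ • x ∈ Φ
  irreducible : ∀ S ⊆ (Φ : Set E), (∀ x ∈ S, ∀ y ∈ (Φ : Set E) \ S, ⟪x, y⟫ = 0) →
    S = ∅ ∨ S = (Φ : Set E)
  α : Fin r → E
  α_mem : ∀ i, α i ∈ Φ
  α_indep : LinearIndependent ℝ α
  pos_or_neg : ∀ x ∈ Φ, (∃ c : Fin r → ℝ, (∀ i, 0 ≤ c i) ∧ x = ∑ i, c i • α i) ∨
    (∃ c : Fin r → ℝ, (∀ i, 0 ≤ c i) ∧ x = -∑ i, c i • α i)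
  ϖ : Fin r → E
  ϖ_pair : ∀ i j, ⟪ϖ i, α j⟫ = if i = j then 1 else 0
  n : Fin r → ℕ
  n_pos : ∀ i, 0 < n i
  α₀ : E
  α₀_mem : α₀ ∈ Φ
  α₀_eq : α₀ = ∑ i, (n i : ℝ) • α i
  α₀_highest : ∀ x ∈ Φ, ∃ c : Fin r → ℝ, (∀ i, 0 ≤ c i) ∧ α₀ - x = ∑ i, c i • α i

namespace KPData

variable {E} {r : ℕ} (D : KPData E r)

/-- The set of positive roots. -/
def posRoots : Set E :=
  {x ∈ (D.Φ : Set E) | ∃ c : Fin r → ℝ, (∀ i, 0 ≤ c i) ∧ x = ∑ i, c i • D.α i}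

/-- The closed fundamental alcove `𝒜₀`. -/
def alcove : Set E := {l | (∀ i, 0 ≤ ⟪l, D.α i⟫) ∧ ⟪l, D.α₀⟫ ≤ 1}

/-- The closed fundamental Weyl chamber `𝒞₀`. -/
def chamber : Set E := {l | ∀ i, 0 ≤ ⟪l, D.α i⟫}

/-- The coroot lattice `Q^∨ = ℤΦ^∨`. -/
def corootLattice : AddSubgroup E := AddSubgroup.closure (coroot E '' (D.Φ : Set E))

/-- The root lattice `Q = ℤΦ`. -/
def rootLattice : AddSubgroup E := AddSubgroup.closure (D.Φ : Set E)

/-- The coweight lattice `P^∨`, spanned by the fundamental coweights. -/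
def coweightLattice : AddSubgroup E := AddSubgroup.closure (Set.range D.ϖ)

/-- The weight lattice `P`. -/
def weightLattice : AddSubgroup E where
  carrier := {x | ∀ y ∈ D.Φ, ∃ m : ℤ, ⟪coroot E y, x⟫ = (m : ℝ)}
  zero_mem' := fun y _ => ⟨0, by simp⟩
  add_mem' := by
    rintro a b ha hb y hy
    obtain ⟨m, hm⟩ := ha y hy
    obtain ⟨m', hm'⟩ := hb y hy
    exact ⟨m + m', by rw [inner_add_right, hm, hm']; push_cast; ring⟩
  neg_mem' := by
    rintro a ha y hy
    obtain ⟨m, hm⟩ := ha y hy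
    exact ⟨-m, by rw [inner_neg_right, hm]; push_cast; ring⟩

/-- The reflection in the hyperplane orthogonal to `x`, as an affine automorphism. -/
def refl (x : E) : E ≃ᵃ[ℝ] E :=
  ((Submodule.reflection (ℝ ∙ x)ᗮ).toLinearEquiv).toAffineEquiv

/-- Translation by a vector, as an affine automorphism. -/
def transl (v : E) : E ≃ᵃ[ℝ] E := AffineEquiv.constVAdd ℝ E v

/-- The finite Weyl group `W`, realized as a group of affine automorphisms. -/
def weylGroup : Subgroup (E ≃ᵃ[ℝ] E) :=
  Subgroup.closure {f | ∃ x ∈ D.Φ, f = refl x}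

/-- The intermediate affine Weyl group `W_Λ = Λ ⋊ W` attached to a lattice `Λ`. -/
def affWeylOf (Λ : AddSubgroup E) : Subgroup (E ≃ᵃ[ℝ] E) :=
  Subgroup.closure ({f | ∃ v ∈ Λ, f = transl v} ∪ {f | ∃ x ∈ D.Φ, f = refl x})

/-- The affine Weyl group `W_a = Q^∨ ⋊ W`. -/
def affWeyl : Subgroup (E ≃ᵃ[ℝ] E) := D.affWeylOf D.corootLattice

/-- The extended affine Weyl group `Ŵ_a = P^∨ ⋊ W`. -/
def extAffWeyl : Subgroup (E ≃ᵃ[ℝ] E) := D.affWeylOf D.coweightLattice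

/-- The stabilizer `Ω` of the fundamental alcove in the extended affine Weyl group. -/
def alcoveStab : Subgroup (E ≃ᵃ[ℝ] E) where
  carrier := {f | f ∈ D.extAffWeyl ∧ f '' D.alcove = D.alcove}
  one_mem' := ⟨one_mem _, by simp [AffineEquiv.coe_one, Set.image_id]⟩
  mul_mem' := by
    rintro a b ⟨ha, ha'⟩ ⟨hb, hb'⟩
    exact ⟨mul_mem ha hb, by rw [AffineEquiv.coe_mul, Set.image_comp, hb', ha']⟩
  inv_mem' := by
    rintro f ⟨hf, hf'⟩
    refine ⟨inv_mem hf, ?_⟩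
    conv_lhs => rw [← hf']
    rw [show ⇑(f⁻¹) = ⇑f.symm from rfl, ← Set.image_comp]
    simp [Function.comp_def]

/-- The Komrakov–Premet polytope `F`. -/
def KP : Set E :=
  {l ∈ D.alcove | ∀ i, D.n i = 1 → ⟪l, D.α₀ + D.α i⟫ ≤ 1}

/-- A closed, connected fundamental domain for a group of affine transformations. -/
def IsFundDom (G : Subgroup (E ≃ᵃ[ℝ] E)) (F : Set E) : Prop :=
  IsClosed F ∧ IsConnected F ∧ (⋃ g ∈ G, (g : E ≃ᵃ[ℝ] E) '' F) = Set.univ ∧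
    ∀ g ∈ G, g ≠ 1 → interior ((g : E ≃ᵃ[ℝ] E) '' F ∩ F) = ∅

/-- The length of a Weyl group element: the number of positive roots sent to negative roots. -/
def len (w : E ≃ᵃ[ℝ] E) : ℕ :=
  Nat.card {x : E // x ∈ D.posRoots ∧ w x ∈ Neg.neg '' D.posRoots}

end KPData

open KPData

variable {E} {r : ℕ}

set_option linter.unusedSectionVars false
namespace KPData

variable (D : KPData E r)

/-- A `W`-stable lattice between the coroot lattice and the coweight lattice. -/
def IsWLattice (Λ : AddSubgroup E) : Prop :=
  D.corootLattice ≤ Λ ∧ Λ ≤ D.coweightLattice ∧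
    ∀ w ∈ D.weylGroup, ∀ x ∈ Λ, (w : E ≃ᵃ[ℝ] E) x ∈ Λ

/-- The subgroup `Ω_Λ = π(Λ ⋊ W)` of `Ω` attached to a `W`-lattice `Λ`; since
`W_a ≤ Λ ⋊ W` and `Ŵ_a = W_a ⋊ Ω`, it coincides with `(Λ ⋊ W) ∩ Ω`. -/
def OmegaOf (Λ : AddSubgroup E) : Subgroup (E ≃ᵃ[ℝ] E) :=
  D.affWeylOf Λ ⊓ D.alcoveStab

lemma transl_add (a b : E) : (transl (a + b) : E ≃ᵃ[ℝ] E) = transl a * transl b := by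
  show AffineEquiv.constVAdd ℝ E (a + b) = _
  rw [AffineEquiv.constVAdd_add]
  rfl

lemma transl_neg (a : E) : (transl (-a) : E ≃ᵃ[ℝ] E) = (transl a)⁻¹ := by
  show AffineEquiv.constVAdd ℝ E (-a) = _
  rw [← AffineEquiv.constVAdd_symm]
  rfl

lemma transl_zero : (transl (0 : E) : E ≃ᵃ[ℝ] E) = 1 := by
  show AffineEquiv.constVAdd ℝ E 0 = _
  rw [AffineEquiv.constVAdd_zero]
  rfl

/-- The `W`-lattice `π⁻¹(H) ∩ P^∨` attached to a subgroup `H` of `Ω`; since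
`π⁻¹(H) = W_a · H`, a coweight `v` belongs to it iff `t_v ∈ W_a ⊔ H`. -/
def latticeOf (H : Subgroup (E ≃ᵃ[ℝ] E)) : AddSubgroup E where
  carrier := {v | v ∈ D.coweightLattice ∧ (transl v : E ≃ᵃ[ℝ] E) ∈ D.affWeyl ⊔ H}
  zero_mem' := ⟨zero_mem _, by rw [transl_zero]; exact one_mem _⟩
  add_mem' := by
    rintro a b ⟨ha, ha'⟩ ⟨hb, hb'⟩
    exact ⟨add_mem ha hb, by rw [transl_add]; exact mul_mem ha' hb'⟩
  neg_mem' := by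
    rintro a ⟨ha, ha'⟩
    exact ⟨neg_mem ha, by rw [transl_neg]; exact inv_mem ha'⟩

end KPData

section Aux

variable (D : KPData E r)

lemma aux_transl_apply (v x : E) : (transl v : E ≃ᵃ[ℝ] E) x = v + x := rfl

lemma aux_mul_apply (f g : E ≃ᵃ[ℝ] E) (x : E) : (f * g) x = f (g x) := rfl

lemma aux_weyl_fix_zero : ∀ w ∈ D.weylGroup, (w : E ≃ᵃ[ℝ] E) 0 = 0 := by
  intro w hw
  induction hw using Subgroup.closure_induction with
  | mem f hf =>
    obtain ⟨x, hx, rfl⟩ := hf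
    show ((Submodule.reflection (ℝ ∙ x)ᗮ).toLinearEquiv.toAffineEquiv : E ≃ᵃ[ℝ] E) 0 = 0
    simp
  | one => rfl
  | mul f g hf hg ihf ihg =>
    show f (g 0) = 0
    rw [ihg, ihf]
  | inv f hf ih =>
    have : (f⁻¹ : E ≃ᵃ[ℝ] E) (f 0) = 0 := f.symm_apply_apply 0
    rwa [ih] at this

lemma aux_weyl_map_add (w : E ≃ᵃ[ℝ] E) (hw : w ∈ D.weylGroup) (a x : E) :
    w (a + x) = w a + w x := by
  have h0 : w 0 = 0 := aux_weyl_fix_zero D w hw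
  have h1 : w (a + x) = w.linear a + w x := w.map_vadd x a
  have h2 : w a = w.linear a := by
    have := w.map_vadd 0 a
    simpa [h0] using this
  rw [h1, h2]

lemma aux_weyl_mul_transl (w : E ≃ᵃ[ℝ] E) (hw : w ∈ D.weylGroup) (b : E) :
    w * transl b = transl (w b) * w := by
  ext x
  show w (b + x) = w b + w x
  exact aux_weyl_map_add D w hw b x

lemma aux_weyl_le (Λ : AddSubgroup E) : D.weylGroup ≤ D.affWeylOf Λ :=
  Subgroup.closure_mono Set.subset_union_right

lemma aux_transl_mem (Λ : AddSubgroup E) {v : E} (hv : v ∈ Λ) :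
    (transl v : E ≃ᵃ[ℝ] E) ∈ D.affWeylOf Λ :=
  Subgroup.subset_closure (Or.inl ⟨v, hv, rfl⟩)

lemma aux_decomp (Λ : AddSubgroup E)
    (hst : ∀ w ∈ D.weylGroup, ∀ x ∈ Λ, (w : E ≃ᵃ[ℝ] E) x ∈ Λ) :
    ∀ f ∈ D.affWeylOf Λ, ∃ v ∈ Λ, ∃ w ∈ D.weylGroup, f = transl v * w := by
  intro f hf
  induction hf using Subgroup.closure_induction with
  | mem f hf =>
    rcases hf with ⟨v, hv, rfl⟩ | ⟨x, hx, rfl⟩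
    · exact ⟨v, hv, 1, one_mem _, (mul_one _).symm⟩
    · exact ⟨0, zero_mem _, refl x, Subgroup.subset_closure ⟨x, hx, rfl⟩,
        by rw [transl_zero, one_mul]⟩
  | one => exact ⟨0, zero_mem _, 1, one_mem _, by rw [transl_zero, one_mul]⟩
  | mul f g hf hg ihf ihg =>
    obtain ⟨a, ha, u, hu, rfl⟩ := ihf
    obtain ⟨b, hb, v, hv, rfl⟩ := ihg
    refine ⟨a + u b, add_mem ha (hst u hu b hb), u * v, mul_mem hu hv, ?_⟩
    calc transl a * u * (transl b * v) = transl a * (u * transl b) * v := by group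
      _ = transl a * (transl (u b) * u) * v := by rw [aux_weyl_mul_transl D u hu]
      _ = transl (a + u b) * (u * v) := by rw [transl_add]; group
  | inv f hf ih =>
    obtain ⟨a, ha, u, hu, rfl⟩ := ih
    refine ⟨(u⁻¹ : E ≃ᵃ[ℝ] E) (-a), hst u⁻¹ (inv_mem hu) (-a) (neg_mem ha),
      u⁻¹, inv_mem hu, ?_⟩
    calc (transl a * u)⁻¹ = u⁻¹ * transl (-a) := by rw [transl_neg]; group
      _ = transl ((u⁻¹ : E ≃ᵃ[ℝ] E) (-a)) * u⁻¹ :=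
        aux_weyl_mul_transl D u⁻¹ (inv_mem hu) (-a)

lemma aux_transl_mem_iff (Λ : AddSubgroup E)
    (hst : ∀ w ∈ D.weylGroup, ∀ x ∈ Λ, (w : E ≃ᵃ[ℝ] E) x ∈ Λ) (v : E) :
    (transl v : E ≃ᵃ[ℝ] E) ∈ D.affWeylOf Λ ↔ v ∈ Λ := by
  constructor
  · intro h
    obtain ⟨a, ha, w, hw, hfw⟩ := aux_decomp D Λ hst _ h
    have := congrArg (fun f : E ≃ᵃ[ℝ] E => f 0) hfw
    simp only [aux_transl_apply, aux_mul_apply, aux_weyl_fix_zero D w hw, add_zero] at this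
    rwa [this]
  · exact aux_transl_mem D Λ

lemma aux_mem_iff (Λ : AddSubgroup E)
    (hst : ∀ w ∈ D.weylGroup, ∀ x ∈ Λ, (w : E ≃ᵃ[ℝ] E) x ∈ Λ)
    (v : E) (w : E ≃ᵃ[ℝ] E) (hw : w ∈ D.weylGroup) :
    (transl v * w : E ≃ᵃ[ℝ] E) ∈ D.affWeylOf Λ ↔ v ∈ Λ := by
  rw [← aux_transl_mem_iff D Λ hst v]
  constructor
  · intro h
    have : (transl v : E ≃ᵃ[ℝ] E) = (transl v * w) * w⁻¹ := by group
    rw [this]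
    exact mul_mem h (inv_mem (aux_weyl_le D Λ hw))
  · intro h
    exact mul_mem h (aux_weyl_le D Λ hw)

lemma aux_weyl_apply_mem_iff (Λ : AddSubgroup E)
    (hst : ∀ w ∈ D.weylGroup, ∀ x ∈ Λ, (w : E ≃ᵃ[ℝ] E) x ∈ Λ)
    (w : E ≃ᵃ[ℝ] E) (hw : w ∈ D.weylGroup) (v : E) :
    (w : E ≃ᵃ[ℝ] E) v ∈ Λ ↔ v ∈ Λ := by
  constructor
  · intro h
    have := hst w⁻¹ (inv_mem hw) _ h
    rwa [show (w⁻¹ : E ≃ᵃ[ℝ] E) (w v) = v from w.symm_apply_apply v] at this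
  · exact hst w hw v

end Aux


/-- For a W-lattice `Λ` and minuscule indices `i, j`:
(a) `ω_i ∈ Ω_Λ` iff `ϖ_i^∨ ∈ Λ`; (b) `Ω_Λ` maps `𝒜₀ ∩ Λ` to itself;
(c) `ω_i Ω_Λ = ω_j Ω_Λ` iff `ϖ_i^∨ − ϖ_j^∨ ∈ Λ`. -/
theorem OmegaOf_properties (D : KPData E r) (Λ : AddSubgroup E) (hΛ : D.IsWLattice Λ)
    (i j : Fin r) (hi : D.n i = 1) (hj : D.n j = 1)
    (wi wj : E ≃ᵃ[ℝ] E) (hwi : wi ∈ D.weylGroup) (hwj : wj ∈ D.weylGroup)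
    (hΩi : transl (D.ϖ i) * wi ∈ D.alcoveStab) (hΩj : transl (D.ϖ j) * wj ∈ D.alcoveStab) :
    (transl (D.ϖ i) * wi ∈ D.OmegaOf Λ ↔ D.ϖ i ∈ Λ) ∧
    (∀ ω ∈ D.OmegaOf Λ, ∀ x ∈ D.alcove ∩ (Λ : Set E), ω x ∈ D.alcove ∩ (Λ : Set E)) ∧
    ((transl (D.ϖ i) * wi) • (D.OmegaOf Λ : Set (E ≃ᵃ[ℝ] E))
        = (transl (D.ϖ j) * wj) • (D.OmegaOf Λ : Set (E ≃ᵃ[ℝ] E)) ↔ D.ϖ i - D.ϖ j ∈ Λ) := by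
  obtain ⟨-, -, hst⟩ := hΛ
  refine ⟨?_, ?_, ?_⟩
  · rw [OmegaOf, Subgroup.mem_inf]
    rw [aux_mem_iff D Λ hst _ wi hwi]
    exact ⟨fun h => h.1, fun h => ⟨h, hΩi⟩⟩
  · rintro ω hω x ⟨hxA, hxL⟩
    rw [OmegaOf, Subgroup.mem_inf] at hω
    obtain ⟨hω1, hω2⟩ := hω
    have himg : ω '' D.alcove = D.alcove := hω2.2
    constructor
    · rw [← himg]; exact ⟨x, hxA, rfl⟩
    · obtain ⟨v, hv, w, hw, rfl⟩ := aux_decomp D Λ hst ω hω1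
      show v + w x ∈ Λ
      exact add_mem hv (hst w hw x hxL)
  · rw [leftCoset_eq_iff, OmegaOf, Subgroup.mem_inf]
    have hkey : (transl (D.ϖ i) * wi)⁻¹ * (transl (D.ϖ j) * wj)
        = transl ((wi⁻¹ : E ≃ᵃ[ℝ] E) (D.ϖ j - D.ϖ i)) * (wi⁻¹ * wj) := by
      calc (transl (D.ϖ i) * wi)⁻¹ * (transl (D.ϖ j) * wj)
          = wi⁻¹ * (transl (D.ϖ i))⁻¹ * transl (D.ϖ j) * wj := by group
        _ = wi⁻¹ * transl (-D.ϖ i) * transl (D.ϖ j) * wj := by rw [transl_neg]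
        _ = wi⁻¹ * (transl (-D.ϖ i + D.ϖ j)) * wj := by rw [transl_add]; group
        _ = wi⁻¹ * transl (D.ϖ j - D.ϖ i) * wj := by rw [neg_add_eq_sub]
        _ = transl ((wi⁻¹ : E ≃ᵃ[ℝ] E) (D.ϖ j - D.ϖ i)) * wi⁻¹ * wj := by
            rw [aux_weyl_mul_transl D wi⁻¹ (inv_mem hwi)]
        _ = transl ((wi⁻¹ : E ≃ᵃ[ℝ] E) (D.ϖ j - D.ϖ i)) * (wi⁻¹ * wj) := by group
    rw [hkey, aux_mem_iff D Λ hst _ _ (mul_mem (inv_mem hwi) hwj),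
      aux_weyl_apply_mem_iff D Λ hst wi⁻¹ (inv_mem hwi)]
    have hstab : transl ((wi⁻¹ : E ≃ᵃ[ℝ] E) (D.ϖ j - D.ϖ i)) * (wi⁻¹ * wj)
        ∈ D.alcoveStab := by
      rw [← hkey]
      exact mul_mem (inv_mem hΩi) hΩj
    constructor
    · intro h
      have := h.1
      rw [← neg_sub (D.ϖ j) (D.ϖ i)]
      exact neg_mem this
    · intro h
      exact ⟨by rwa [← neg_sub, neg_mem_iff], hstab⟩
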